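/- Let u be a unit vector in ℝ^2, P > 0 a real number, and Σ a 2×2 real symmetric positive semidefinite matrix with ‖Σ‖_F < P/2. Let u⊥ be a unit vector orthogonal to u and p̃ = (u⊥)ᵀ Σ u the off-diagonal entry of Σ in the basis (u, u⊥). Then the top eigenvector v of M = P·u uᵀ + Σ (suitably sign-normalized) satisfies ‖v − u‖₂ ≤ 2|p̃| / (P − 2‖Σ‖_F). -/

import Mathlib

open Matrix

/-- Davis–Kahan-type bound for the spiked model `M = P uuᵀ + Σ`. -/
theorem top_eigenvector_close_to_doa
    (u uperp v : Fin 2 → ℝ) (P : ℝ) (Sig : Matrix (Fin 2) (Fin 2) ℝ)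
    (hu : u ⬝ᵥ u = 1) (huperp : uperp ⬝ᵥ uperp = 1) (horth : u ⬝ᵥ uperp = 0)
    (hP : 0 < P) (hsym : Sigᵀ = Sig) (hpsd : Sig.PosSemidef)
    (hfrob : Real.sqrt (∑ i, ∑ j, |Sig i j| ^ 2) < P / 2)
    (M : Matrix (Fin 2) (Fin 2) ℝ)
    (hMdef : M = P • vecMulVec u u + Sig)
    (hM : M.IsHermitian)
    (hv : M *ᵥ v = (⨆ i, hM.eigenvalues i) • v)
    (hvnorm : v ⬝ᵥ v = 1) (hsign : 0 ≤ v ⬝ᵥ u) :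
    Real.sqrt (∑ i, (v i - u i) ^ 2) ≤
      2 * |uperp ⬝ᵥ Sig *ᵥ u| /
        (P - 2 * Real.sqrt (∑ i, ∑ j, |Sig i j| ^ 2)) := by
  set L : ℝ := ⨆ i, hM.eigenvalues i with hLdef
  -- trace fact
  have htr : M.trace = ∑ i, hM.eigenvalues i := by
    conv_lhs => rw [hM.spectral_theorem]
    rw [Unitary.conjStarAlgAut_apply, Matrix.trace_mul_cycle]
    rw [Matrix.mem_unitaryGroup_iff'.mp (Matrix.IsHermitian.eigenvectorUnitary hM).2]
    simp [Matrix.trace_diagonal]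
  have hbdd : BddAbove (Set.range hM.eigenvalues) := Set.Finite.bddAbove (Set.finite_range _)
  have h2L : M.trace ≤ 2 * L := by
    have h0 := le_ciSup hbdd (0 : Fin 2)
    have h1 := le_ciSup hbdd (1 : Fin 2)
    rw [htr, Fin.sum_univ_two]
    rw [hLdef]; linarith
  have htrs : M.trace = P * (u 0 * u 0 + u 1 * u 1) + (Sig 0 0 + Sig 1 1) := by
    simp [hMdef, Matrix.trace, Fin.sum_univ_two, Matrix.diag, Matrix.vecMulVec_apply]; ring
  -- diag nonneg
  have hS00 : 0 ≤ Sig 0 0 := hpsd.diag_nonneg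
  have hS11 : 0 ≤ Sig 1 1 := hpsd.diag_nonneg
  have hs10 : Sig 1 0 = Sig 0 1 := by
    have := congrFun (congrFun hsym 0) 1
    simpa [Matrix.transpose_apply] using this
  -- eigen equations, scalar
  have he0 := congrFun hv 0
  have he1 := congrFun hv 1
  rw [hMdef] at he0 he1
  simp only [Matrix.add_apply, Matrix.smul_apply, Matrix.vecMulVec_apply, Pi.add_apply,
    Pi.smul_apply, Matrix.mulVec, dotProduct, Fin.sum_univ_two,
    smul_eq_mul] at he0 he1
  simp only [dotProduct, Fin.sum_univ_two] at hu huperp horth hvnorm hsign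
  simp only [Fin.sum_univ_two, sq_abs] at hfrob
  simp only [dotProduct, Matrix.mulVec, Fin.sum_univ_two, sq_abs]
  -- notation
  set a : ℝ := v 0 * u 0 + v 1 * u 1 with hadef
  set t : ℝ := u 0 * uperp 1 - u 1 * uperp 0 with htdef
  have ht2 : t ^ 2 = 1 := by
    rw [htdef]
    linear_combination (uperp 0 * uperp 0 + uperp 1 * uperp 1) * hu + huperp -
      (u 0 * uperp 0 + u 1 * uperp 1) * horth
  have hw0 : uperp 0 = -(t * u 1) := by
    rw [htdef]; linear_combination (-(uperp 0)) * hu + u 0 * horth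
  have hw1 : uperp 1 = t * u 0 := by
    rw [htdef]; linear_combination (-(uperp 1)) * hu + u 1 * horth
  set b : ℝ := uperp 0 * v 0 + uperp 1 * v 1 with hbdef
  have ha2b2 : a ^ 2 + b ^ 2 = 1 := by
    rw [hadef, hbdef, hw0, hw1]
    linear_combination (u 0 * v 1 - u 1 * v 0) ^ 2 * ht2 + (v 0 ^ 2 + v 1 ^ 2) * hu + hvnorm
  have hv0 : v 0 = a * u 0 + b * uperp 0 := by
    rw [hadef, hbdef, hw0, hw1]
    linear_combination (-(u 1 ^ 2 * v 0 - u 0 * u 1 * v 1)) * ht2 - v 0 * hu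
  have hv1 : v 1 = a * u 1 + b * uperp 1 := by
    rw [hadef, hbdef, hw0, hw1]
    linear_combination (-(u 0 ^ 2 * v 1 - u 0 * u 1 * v 0)) * ht2 - v 1 * hu
  set N : ℝ := Real.sqrt (Sig 0 0 ^ 2 + Sig 0 1 ^ 2 + (Sig 1 0 ^ 2 + Sig 1 1 ^ 2)) with hNdef
  set p : ℝ := uperp 0 * (Sig 0 0 * u 0 + Sig 0 1 * u 1) +
      uperp 1 * (Sig 1 0 * u 0 + Sig 1 1 * u 1) with hpdef
  set q : ℝ := uperp 0 * (Sig 0 0 * uperp 0 + Sig 0 1 * uperp 1) +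
      uperp 1 * (Sig 1 0 * uperp 0 + Sig 1 1 * uperp 1) with hqdef
  have hkey : b * L = a * p + b * q := by
    linear_combination (-(uperp 0)) * he0 - uperp 1 * he1 +
      P * (u 0 * v 0 + u 1 * v 1) * horth +
      (uperp 0 * Sig 0 0 + uperp 1 * Sig 1 0) * hv0 +
      (uperp 0 * Sig 0 1 + uperp 1 * Sig 1 1) * hv1 + L * hbdef + a * hpdef + b * hqdef
  have hN0 : (0:ℝ) ≤ N := Real.sqrt_nonneg _
  have hN2 : N ^ 2 = Sig 0 0 ^ 2 + Sig 0 1 ^ 2 + (Sig 1 0 ^ 2 + Sig 1 1 ^ 2) := by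
    rw [hNdef]; exact Real.sq_sqrt (by positivity)
  have hperp2 : (uperp 0 ^ 2 + uperp 1 ^ 2) ^ 2 = 1 := by
    linear_combination (uperp 0 ^ 2 + uperp 1 ^ 2 + 1) * huperp
  have hq2 : q ^ 2 ≤ N ^ 2 := by
    have hCS : (Sig 0 0 ^ 2 + 2 * Sig 0 1 ^ 2 + Sig 1 1 ^ 2) * (uperp 0 ^ 2 + uperp 1 ^ 2) ^ 2
        - q ^ 2 =
        2 * (Sig 0 0 * uperp 0 * uperp 1 - Sig 0 1 * uperp 0 ^ 2) ^ 2 +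
        (Sig 0 0 * uperp 1 ^ 2 - Sig 1 1 * uperp 0 ^ 2) ^ 2 +
        2 * (Sig 0 1 * uperp 1 ^ 2 - Sig 1 1 * uperp 0 * uperp 1) ^ 2 := by
      rw [hqdef, hs10]; ring
    have hone : (Sig 0 0 ^ 2 + 2 * Sig 0 1 ^ 2 + Sig 1 1 ^ 2) * (uperp 0 ^ 2 + uperp 1 ^ 2) ^ 2
        = Sig 0 0 ^ 2 + 2 * Sig 0 1 ^ 2 + Sig 1 1 ^ 2 := by rw [hperp2, mul_one]
    have hNS : N ^ 2 = Sig 0 0 ^ 2 + 2 * Sig 0 1 ^ 2 + Sig 1 1 ^ 2 := by rw [hN2, hs10]; ring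
    linarith [hCS, hone, hNS, sq_nonneg (Sig 0 0 * uperp 0 * uperp 1 - Sig 0 1 * uperp 0 ^ 2),
      sq_nonneg (Sig 0 0 * uperp 1 ^ 2 - Sig 1 1 * uperp 0 ^ 2),
      sq_nonneg (Sig 0 1 * uperp 1 ^ 2 - Sig 1 1 * uperp 0 * uperp 1)]
  have hqN : q ≤ N :=
    calc q ≤ |q| := le_abs_self q
      _ = Real.sqrt (q ^ 2) := (Real.sqrt_sq_eq_abs q).symm
      _ ≤ Real.sqrt (N ^ 2) := Real.sqrt_le_sqrt hq2
      _ = N := Real.sqrt_sq hN0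
  have hL2 : P + (Sig 0 0 + Sig 1 1) ≤ 2 * L := by
    rw [htrs, hu, mul_one] at h2L; linarith
  have hD : 0 < P - 2 * N := by linarith
  have hsum : (v 0 - u 0) ^ 2 + (v 1 - u 1) ^ 2 = 2 - 2 * a := by
    rw [hadef]; linear_combination hu + hvnorm
  clear_value L N p q a b t
  clear hLdef hNdef hpdef hqdef hadef hbdef htdef
  clear hv htr hbdd h2L htrs hM hMdef hpsd hsym M hfrob he0 he1 hq2 hN2 hperp2
    hv0 hv1 hw0 hw1 ht2 huperp horth
  have hE : (P - 2 * N) / 2 ≤ L - q := by linarith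
  have hE0 : (0:ℝ) < L - q := by linarith
  have ha1 : a ≤ 1 := by nlinarith [ha2b2, hsign, sq_nonneg b]
  have h5 : b ^ 2 * (L - q) ^ 2 = a ^ 2 * p ^ 2 := by
    linear_combination (b * (L - q) + a * p) * hkey
  have h6 : (2 - 2 * a) * (1 + a) = 2 * b ^ 2 := by linear_combination (-2) * ha2b2
  have h2a : 2 * a ^ 2 ≤ 1 + a := by nlinarith [ha1, hsign]
  have h1a : (0:ℝ) < 1 + a := by linarith
  have h7 : (2 - 2 * a) * (L - q) ^ 2 ≤ p ^ 2 := by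
    have hmul : ((2 - 2 * a) * (L - q) ^ 2) * (1 + a) ≤ p ^ 2 * (1 + a) := by
      have heq : ((2 - 2 * a) * (L - q) ^ 2) * (1 + a) = 2 * (a ^ 2 * p ^ 2) := by
        linear_combination (L - q) ^ 2 * h6 + 2 * h5
      rw [heq]
      nlinarith [mul_nonneg (by linarith : (0:ℝ) ≤ 1 + a - 2 * a ^ 2) (sq_nonneg p)]
    exact le_of_mul_le_mul_right hmul h1a
  have h22a : (0:ℝ) ≤ 2 - 2 * a := by linarith
  have hDE : (P - 2 * N) ^ 2 ≤ (2 * (L - q)) ^ 2 := by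
    have h1 : P - 2 * N ≤ 2 * (L - q) := by linarith
    exact pow_le_pow_left₀ hD.le h1 2
  have h8 : (2 - 2 * a) * (P - 2 * N) ^ 2 ≤ 4 * p ^ 2 := by
    calc (2 - 2 * a) * (P - 2 * N) ^ 2 ≤ (2 - 2 * a) * (2 * (L - q)) ^ 2 :=
          mul_le_mul_of_nonneg_left hDE h22a
      _ = 4 * ((2 - 2 * a) * (L - q) ^ 2) := by ring
      _ ≤ 4 * p ^ 2 := by linarith [h7]
  rw [hsum]
  have h9 : 2 - 2 * a ≤ (2 * |p| / (P - 2 * N)) ^ 2 := by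
    rw [div_pow, mul_pow, sq_abs, le_div_iff₀ (by positivity)]
    linarith [h8]
  calc Real.sqrt (2 - 2 * a) ≤ Real.sqrt ((2 * |p| / (P - 2 * N)) ^ 2) :=
        Real.sqrt_le_sqrt h9
    _ = 2 * |p| / (P - 2 * N) := Real.sqrt_sq (by positivity)
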